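/- Let 𝒱 be a variety of groups defined by a set of words V. Then 𝒱 is a Schur-Baer variety if and only if for every finite group G, the Baer invariant 𝒱M(G) is finite of order dividing a power of |G|. -/

import Mathlib

/-! Common framework: varieties of groups, verbal and marginal subgroups,
word values, the `B̃₀`-invariant of a group with respect to a variety. -/

universe u v

/-- The set `T(G)` of values in `G` of the words in `V`. -/
def wordValues (V : Set (FreeGroup ℕ)) (G : Type*) [Group G] : Set G :=
  {g | ∃ v ∈ V, ∃ f : ℕ → G, FreeGroup.lift f v = g}

/-- The verbal subgroup `V(G)`, generated by all values in `G` of words of `V`. -/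
def verbal (V : Set (FreeGroup ℕ)) (G : Type*) [Group G] : Subgroup G :=
  Subgroup.closure (wordValues V G)

/-- The verbal subgroup `V(B)` of a subgroup `B` of `G`, viewed as a subgroup of `G`:
it is generated by all values of words of `V` at tuples of elements of `B`. -/
def verbalOn (V : Set (FreeGroup ℕ)) {G : Type*} [Group G] (B : Subgroup G) : Subgroup G :=
  Subgroup.closure {g | ∃ v ∈ V, ∃ f : ℕ → G, (∀ n, f n ∈ B) ∧ FreeGroup.lift f v = g}

/-- The marginal subgroup `V*(G)`: those `a` such that replacing any entry `gᵢ` of any tuple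
by `gᵢ * a` does not change the value of any word of `V`. -/
def marginal (V : Set (FreeGroup ℕ)) (G : Type*) [Group G] : Subgroup G where
  carrier := {a | ∀ v ∈ V, ∀ f : ℕ → G, ∀ i : ℕ,
    FreeGroup.lift (Function.update f i (f i * a)) v = FreeGroup.lift f v}
  one_mem' := by
    intro v hv f i
    rw [mul_one, Function.update_eq_self]
  mul_mem' := by
    intro a b ha hb v hv f i
    have h1 := hb v hv (Function.update f i (f i * a)) i
    rw [Function.update_self, Function.update_idem] at h1
    rw [← mul_assoc]
    exact h1.trans (ha v hv f i)
  inv_mem' := by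
    intro a ha v hv f i
    have h1 := ha v hv (Function.update f i (f i * a⁻¹)) i
    rw [Function.update_self, Function.update_idem, inv_mul_cancel_right,
      Function.update_eq_self] at h1
    exact h1.symm

lemma FreeGroup.lift_conj {α : Type*} {G : Type*} [Group G] (f : α → G) (c : G)
    (w : FreeGroup α) :
    FreeGroup.lift (fun n => c * f n * c⁻¹) w = c * FreeGroup.lift f w * c⁻¹ := by
  have h : (FreeGroup.lift (fun n => c * f n * c⁻¹) : FreeGroup α →* G)
      = ((MulAut.conj c).toMonoidHom.comp (FreeGroup.lift f)) := by
    apply FreeGroup.ext_hom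
    intro a
    simp
  rw [h]
  simp

lemma Subgroup.closure_normal_of_conj {G : Type*} [Group G] {S : Set G}
    (hS : ∀ c : G, ∀ g ∈ S, c * g * c⁻¹ ∈ S) : (Subgroup.closure S).Normal := by
  constructor
  intro x hx c
  induction hx using Subgroup.closure_induction with
  | mem g hg => exact Subgroup.subset_closure (hS c g hg)
  | one => simpa using (Subgroup.closure S).one_mem
  | mul a b _ _ pa pb =>
      have h : c * (a * b) * c⁻¹ = (c * a * c⁻¹) * (c * b * c⁻¹) := by group
      rw [h]; exact mul_mem pa pb
  | inv a _ pa =>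
      have h : c * a⁻¹ * c⁻¹ = (c * a * c⁻¹)⁻¹ := by group
      rw [h]; exact inv_mem pa

lemma wordValues_conj_mem {V : Set (FreeGroup ℕ)} {G : Type*} [Group G]
    (c : G) {g : G} (hg : g ∈ wordValues V G) : c * g * c⁻¹ ∈ wordValues V G := by
  obtain ⟨v, hv, f, rfl⟩ := hg
  exact ⟨v, hv, fun n => c * f n * c⁻¹, FreeGroup.lift_conj f c v⟩

/-- The canonical free presentation `1 → R → F → G → 1` of `G`, with
`F = FreeGroup G` the free group on the underlying set of `G`. -/
def presHom (G : Type*) [Group G] : FreeGroup G →* G := FreeGroup.lift id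

/-- The relation subgroup `R` of the canonical free presentation of `G`. -/
def presKer (G : Type*) [Group G] : Subgroup (FreeGroup G) := (presHom G).ker

/-- The numerator `R ∩ V(F)` of the `B̃₀`-invariant. -/
def vB0Num (V : Set (FreeGroup ℕ)) (G : Type*) [Group G] : Subgroup (FreeGroup G) :=
  presKer G ⊓ verbal V (FreeGroup G)

/-- The denominator `⟨T(F) ∩ R⟩` of the `B̃₀`-invariant. -/
def vB0Den (V : Set (FreeGroup ℕ)) (G : Type*) [Group G] : Subgroup (FreeGroup G) :=
  Subgroup.closure (wordValues V (FreeGroup G) ∩ (presKer G : Set (FreeGroup G)))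

lemma vB0Den_normal (V : Set (FreeGroup ℕ)) (G : Type*) [Group G] : (vB0Den V G).Normal := by
  apply Subgroup.closure_normal_of_conj
  rintro c g ⟨hg1, hg2⟩
  exact ⟨wordValues_conj_mem c hg1, (presHom G).normal_ker.conj_mem g hg2 c⟩

instance vB0DenSubgroupOf_normal (V : Set (FreeGroup ℕ)) (G : Type*) [Group G] :
    ((vB0Den V G).subgroupOf (vB0Num V G)).Normal :=
  (vB0Den_normal V G).subgroupOf _

/-- The `B̃₀`-invariant `𝒱B̃₀(G) = (R ∩ V(F)) / ⟨T(F) ∩ R⟩` of `G` with respect to the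
variety defined by the set of words `V`, computed from the canonical free presentation. -/
def vB0 (V : Set (FreeGroup ℕ)) (G : Type*) [Group G] : Type _ :=
  ↥(vB0Num V G) ⧸ (vB0Den V G).subgroupOf (vB0Num V G)

instance (V : Set (FreeGroup ℕ)) (G : Type*) [Group G] : Group (vB0 V G) :=
  inferInstanceAs (Group (↥(vB0Num V G) ⧸ (vB0Den V G).subgroupOf (vB0Num V G)))

/-- A variety defined by a set of words `V` is a Schur-Baer variety if, for every group `G`
whose marginal factor `G/V*(G)` is finite (of order `m = [G : V*(G)]`), the verbal subgroup
`V(G)` is finite of order dividing a power of `m`. -/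
def IsSchurBaer (V : Set (FreeGroup ℕ)) : Prop :=
  ∀ (G : Type u) [Group G], (marginal V G).FiniteIndex →
    Finite (verbal V G) ∧ ∃ k : ℕ, Nat.card (verbal V G) ∣ (marginal V G).index ^ k

open scoped commutatorElement

/-- Outer commutator words: `IsOCWord a b w` means that `w` is an outer commutator word
in the (distinct) variables `x_a, x_{a+1}, …, x_{b-1}` (so of weight `b - a`).
`IsOCWord 0 r w` means `w = w(x₁,…,x_r)` is an outer commutator word of weight `r`. -/
inductive IsOCWord : ℕ → ℕ → FreeGroup ℕ → Prop
  | var (i : ℕ) : IsOCWord i (i + 1) (FreeGroup.of i)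
  | comm {a b c : ℕ} {u v : FreeGroup ℕ} :
      IsOCWord a b u → IsOCWord b c v → IsOCWord a c ⁅u, v⁆

/-- Given an outer commutator word `w = w(x₁,…,x_r)` (in variables `x_0,…,x_{r-1}`),
the set of laws `{[w(x₁,…,x_r), x_{r+1}, x_{r+2}]}` defining the
center-by-center-by-`w` variety. -/
def ocVariety (w : FreeGroup ℕ) (r : ℕ) : Set (FreeGroup ℕ) :=
  {⁅⁅w, FreeGroup.of r⁆, FreeGroup.of (r + 1)⁆}

/-- The lifting condition of a VP extension: any trivial word (a value of a word of `V`
which equals `1`) of elements of the quotient has a trivial lift. -/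
def HasVPLifts (V : Set (FreeGroup ℕ)) {G Q : Type*} [Group G] [Group Q] (π : G →* Q) : Prop :=
  ∀ v ∈ V, ∀ q : ℕ → Q, FreeGroup.lift q v = 1 →
    ∃ g : ℕ → G, (∀ i, π (g i) = q i) ∧ FreeGroup.lift g v = 1

/-- `1 → L → G* → Q → 1` is a VP cover of `Q` (with respect to the variety defined by `V`):
a `𝒱`-stem marginal VP extension with `L ≅ 𝒱B̃₀(Q)`. Here `L` is realized as a subgroup
of `G*` and `π : G* → Q` is the projection. -/
structure IsVPCover (V : Set (FreeGroup ℕ)) {Gs : Type*} {Q : Type*} [Group Gs] [Group Q]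
    (L : Subgroup Gs) (π : Gs →* Q) : Prop where
  surj : Function.Surjective π
  ker_eq : π.ker = L
  marginal_le : L ≤ marginal V Gs
  stem : L ≤ verbal V Gs
  lifts : HasVPLifts V π
  iso : Nonempty (L ≃* vB0 V Q)

/-- The single commutator word `[x₁, x₂]` defining the variety of abelian groups. -/
def commutatorWord : Set (FreeGroup ℕ) := {⁅FreeGroup.of 0, FreeGroup.of 1⁆}

/-- The Bogomolov multiplier `B̃₀(G) = (R ∩ [F,F]) / ⟨K(F) ∩ R⟩`: the `B̃₀`-invariant with
respect to the variety of abelian groups (then the verbal subgroup of the free group `F` is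
its derived subgroup `[F,F]` and the set of word values is the set `K(F)` of commutators). -/
def B0tilde (G : Type*) [Group G] : Type _ := vB0 commutatorWord G

instance (G : Type*) [Group G] : Group (B0tilde G) := inferInstanceAs (Group (vB0 commutatorWord G))

/-- The set of generators of `[R V* F]`:
all `v(f₁,…,fᵢr,…,f_s) · v(f₁,…,f_s)⁻¹` with `v ∈ V`, `fⱼ ∈ F`, `r ∈ R`. -/
def margCommSet (V : Set (FreeGroup ℕ)) {F : Type*} [Group F] (R : Subgroup F) : Set F :=
  {x | ∃ v ∈ V, ∃ f : ℕ → F, ∃ i : ℕ, ∃ r ∈ R,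
    FreeGroup.lift (Function.update f i (f i * r)) v * (FreeGroup.lift f v)⁻¹ = x}

/-- The subgroup `[R V* F]` for the canonical free presentation of `G`. -/
def vMDen (V : Set (FreeGroup ℕ)) (G : Type*) [Group G] : Subgroup (FreeGroup G) :=
  Subgroup.closure (margCommSet V (presKer G))

lemma vMDen_normal (V : Set (FreeGroup ℕ)) (G : Type*) [Group G] : (vMDen V G).Normal := by
  apply Subgroup.closure_normal_of_conj
  rintro c g ⟨v, hv, f, i, r, hr, rfl⟩
  refine ⟨v, hv, fun n => c * f n * c⁻¹, i, c * r * c⁻¹,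
    (presHom G).normal_ker.conj_mem r hr c, ?_⟩
  have h1 : Function.update (fun n => c * f n * c⁻¹) i
      ((fun n => c * f n * c⁻¹) i * (c * r * c⁻¹))
      = fun n => c * (Function.update f i (f i * r)) n * c⁻¹ := by
    have h2 : (fun n => c * (Function.update f i (f i * r)) n * c⁻¹)
        = (fun y => c * y * c⁻¹) ∘ (Function.update f i (f i * r)) := rfl
    rw [h2, Function.comp_update]
    have h3 : (fun y => c * y * c⁻¹) ∘ f = fun n => c * f n * c⁻¹ := rfl
    rw [h3]
    group
  rw [h1, FreeGroup.lift_conj, FreeGroup.lift_conj]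
  group

instance vMDenSubgroupOf_normal (V : Set (FreeGroup ℕ)) (G : Type*) [Group G] :
    ((vMDen V G).subgroupOf (vB0Num V G)).Normal :=
  (vMDen_normal V G).subgroupOf _

/-- The Baer invariant `𝒱M(G) = (R ∩ V(F)) / [R V* F]` of `G` with respect to the variety
defined by `V`, computed from the canonical free presentation. -/
def vM (V : Set (FreeGroup ℕ)) (G : Type*) [Group G] : Type _ :=
  ↥(vB0Num V G) ⧸ (vMDen V G).subgroupOf (vB0Num V G)

instance (V : Set (FreeGroup ℕ)) (G : Type*) [Group G] : Group (vM V G) :=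
  inferInstanceAs (Group (↥(vB0Num V G) ⧸ (vMDen V G).subgroupOf (vB0Num V G)))

/-! ### Auxiliary lemmas -/

lemma myLift_comp {α : Type*} {G H : Type*} [Group G] [Group H] (φ : G →* H) (f : α → G)
    (w : FreeGroup α) : φ (FreeGroup.lift f w) = FreeGroup.lift (fun a => φ (f a)) w := by
  have h : φ.comp (FreeGroup.lift f) = FreeGroup.lift (fun a => φ (f a)) :=
    FreeGroup.ext_hom _ _ (by simp)
  exact DFunLike.congr_fun h w

lemma myLift_agree {α : Type*} [DecidableEq α] {G : Type*} [Group G] {f g : α → G}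
    (w : FreeGroup α) (h : ∀ a ∈ w.toWord.map Prod.fst, f a = g a) :
    FreeGroup.lift f w = FreeGroup.lift g w := by
  conv_lhs => rw [← FreeGroup.mk_toWord (x := w)]
  conv_rhs => rw [← FreeGroup.mk_toWord (x := w)]
  rw [FreeGroup.lift_mk, FreeGroup.lift_mk]
  congr 1
  apply List.map_congr_left
  intro x hx
  rw [h x.1 (List.mem_map_of_mem hx)]

/-- Simultaneous replacement of all entries by marginal multiples does not change
word values. -/
lemma marginal_replace {V : Set (FreeGroup ℕ)} {G : Type*} [Group G] {v : FreeGroup ℕ}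
    (hv : v ∈ V) (f a : ℕ → G) (ha : ∀ n, a n ∈ marginal V G) :
    FreeGroup.lift (fun n => f n * a n) v = FreeGroup.lift f v := by
  have key : ∀ k : ℕ, FreeGroup.lift (fun n => if n < k then f n * a n else f n) v
      = FreeGroup.lift f v := by
    intro k
    induction k with
    | zero => simp
    | succ k ih =>
      have hupd : (fun n => if n < k + 1 then f n * a n else f n)
          = Function.update (fun n => if n < k then f n * a n else f n) k
            ((fun n => if n < k then f n * a n else f n) k * a k) := by
        funext n
        rcases eq_or_ne n k with rfl | hn
        · have h1 : n < n + 1 := Nat.lt_succ_self n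
          have h2 : ¬ n < n := lt_irrefl n
          simp [Function.update_self, h1, h2]
        · rw [Function.update_of_ne hn]
          rcases lt_or_ge n k with h | h
          · have h1 : n < k + 1 := Nat.lt_succ_of_lt h
            simp [h, h1]
          · have h1 : ¬ n < k := not_lt.2 h
            have h2 : ¬ n < k + 1 := by omega
            simp [h1, h2]
      rw [hupd, ha k v hv _ k, ih]
  set N := ((v.toWord.map Prod.fst).toFinset.sup id) + 1 with hN
  rw [← key N]
  apply myLift_agree
  intro i hi
  have hle : i ≤ (v.toWord.map Prod.fst).toFinset.sup id :=
    Finset.le_sup (f := id) (List.mem_toFinset.2 hi)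
  have : i < N := by omega
  simp [this]

instance marginal_normal (V : Set (FreeGroup ℕ)) (G : Type*) [Group G] :
    (marginal V G).Normal := by
  constructor
  intro a ha c v hv f i
  set g : ℕ → G := fun n => c⁻¹ * f n * c with hg
  have hf : f = fun n => c * g n * c⁻¹ := by funext n; simp [hg]; group
  have hupd : Function.update f i (f i * (c * a * c⁻¹))
      = fun n => c * (Function.update g i (g i * a)) n * c⁻¹ := by
    funext n
    rcases eq_or_ne n i with rfl | hn
    · rw [Function.update_self, Function.update_self, hf]
      group
    · rw [Function.update_of_ne hn, Function.update_of_ne hn]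
      exact congrFun hf n
  rw [hupd, FreeGroup.lift_conj, ha v hv g i, ← FreeGroup.lift_conj, ← hf]

lemma verbal_map_le (V : Set (FreeGroup ℕ)) {G H : Type*} [Group G] [Group H] (φ : G →* H) :
    (verbal V G).map φ ≤ verbal V H := by
  rw [verbal, MonoidHom.map_closure]
  apply Subgroup.closure_mono
  rintro _ ⟨x, ⟨v, hv, f, rfl⟩, rfl⟩
  exact ⟨v, hv, fun n => φ (f n), (myLift_comp φ f v).symm⟩

lemma myCard_dvd_of_injective {A B : Type*} [Group A] [Group B] (f : A →* B)
    (hf : Function.Injective f) : Nat.card A ∣ Nat.card B :=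
  (Nat.card_congr (MonoidHom.ofInjective hf).toEquiv).symm ▸
    Subgroup.card_subgroup_dvd_card f.range

lemma myCard_dvd_of_surjective {A B : Type*} [Group A] [Group B] (f : A →* B)
    (hf : Function.Surjective f) : Nat.card B ∣ Nat.card A :=
  (Nat.card_congr (QuotientGroup.quotientKerEquivOfSurjective f hf).toEquiv) ▸
    Subgroup.card_quotient_dvd_card f.ker

lemma stmt13_forward (V : Set (FreeGroup ℕ)) (hSB : IsSchurBaer.{u} V) (G : Type u) [Group G]
    (hG : Finite G) :
    Finite (vM V G) ∧ ∃ k : ℕ, Nat.card (vM V G) ∣ Nat.card G ^ k := by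
  classical
  letI : (vMDen V G).Normal := vMDen_normal V G
  set D := vMDen V G with hD
  let mk : FreeGroup G →* FreeGroup G ⧸ D := QuotientGroup.mk' D
  have hmk_surj : Function.Surjective mk := QuotientGroup.mk'_surjective D
  have hkermk : mk.ker = D := QuotientGroup.ker_mk' D
  -- `D ≤ R`
  have hDle : D ≤ presKer G := by
    rw [hD, vMDen, Subgroup.closure_le]
    rintro x ⟨v, hv, f, i, r, hr, rfl⟩
    have hr1 : presHom G r = 1 := hr
    have h1 : (fun n => presHom G (Function.update f i (f i * r) n))
        = fun n => presHom G (f n) := by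
      funext n
      rcases eq_or_ne n i with rfl | hn
      · rw [Function.update_self, map_mul, hr1, mul_one]
      · rw [Function.update_of_ne hn]
    show _ ∈ (presHom G).ker
    rw [MonoidHom.mem_ker, map_mul, map_inv, myLift_comp, myLift_comp, h1, mul_inv_cancel]
  let φ : (FreeGroup G ⧸ D) →* G := QuotientGroup.lift D (presHom G) hDle
  have hφ_surj : Function.Surjective φ := by
    intro g
    refine ⟨mk (FreeGroup.of g), ?_⟩
    show presHom G (FreeGroup.of g) = g
    simp [presHom]
  -- `ker φ = R/D` is marginal in `F/D`
  have hker_marg : φ.ker ≤ marginal V (FreeGroup G ⧸ D) := by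
    intro hh hhk
    obtain ⟨x, rfl⟩ := hmk_surj hh
    have hx : x ∈ presKer G := hhk
    show ∀ v ∈ V, ∀ f : ℕ → FreeGroup G ⧸ D, ∀ i : ℕ,
      FreeGroup.lift (Function.update f i (f i * mk x)) v = FreeGroup.lift f v
    intro v hv f i
    let g : ℕ → FreeGroup G := fun n => (f n).out
    have hgf : ∀ n, mk (g n) = f n := fun n => QuotientGroup.out_eq' (f n)
    have hmem : FreeGroup.lift (Function.update g i (g i * x)) v * (FreeGroup.lift g v)⁻¹ ∈ D :=
      Subgroup.subset_closure ⟨v, hv, g, i, x, hx, rfl⟩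
    have key : mk (FreeGroup.lift (Function.update g i (g i * x)) v)
        = mk (FreeGroup.lift g v) := by
      rw [← mul_inv_eq_one, ← map_inv, ← map_mul]
      exact MonoidHom.mem_ker.mp (by rw [hkermk]; exact hmem)
    have hfun1 : (Function.update f i (f i * mk x))
        = fun n => mk (Function.update g i (g i * x) n) := by
      funext n
      rcases eq_or_ne n i with rfl | hn
      · rw [Function.update_self, Function.update_self, map_mul, hgf]
      · rw [Function.update_of_ne hn, Function.update_of_ne hn, hgf]
    have hfun2 : (fun n => mk (g n)) = f := funext hgf
    calc FreeGroup.lift (Function.update f i (f i * mk x)) v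
        = FreeGroup.lift (fun n => mk (Function.update g i (g i * x) n)) v := by rw [hfun1]
      _ = mk (FreeGroup.lift (Function.update g i (g i * x)) v) := (myLift_comp mk _ v).symm
      _ = mk (FreeGroup.lift g v) := key
      _ = FreeGroup.lift f v := by rw [myLift_comp, hfun2]
  -- the marginal subgroup of `F/D` has finite index dividing `|G|`
  have hkerindex : φ.ker.index = Nat.card G :=
    Nat.card_congr (QuotientGroup.quotientKerEquivOfSurjective φ hφ_surj).toEquiv
  have hidx_dvd : (marginal V (FreeGroup G ⧸ D)).index ∣ Nat.card G :=
    hkerindex ▸ Subgroup.index_dvd_of_le hker_marg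
  have hGpos : Nat.card G ≠ 0 := Nat.card_pos.ne'
  have hfinidx : (marginal V (FreeGroup G ⧸ D)).FiniteIndex := by
    constructor
    intro h0
    rw [h0] at hidx_dvd
    exact hGpos (zero_dvd_iff.mp hidx_dvd)
  obtain ⟨hfinV, k, hk⟩ := hSB (FreeGroup G ⧸ D) hfinidx
  -- embed `vM V G` into the verbal subgroup of `F/D`
  have hθmem : ∀ x : vB0Num V G, mk.comp (vB0Num V G).subtype x ∈ verbal V (FreeGroup G ⧸ D) :=
    fun x => verbal_map_le V mk ⟨x.1, (Subgroup.mem_inf.mp x.2).2, rfl⟩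
  let θ : ↥(vB0Num V G) →* ↥(verbal V (FreeGroup G ⧸ D)) :=
    (mk.comp (vB0Num V G).subtype).codRestrict _ hθmem
  have hkill : ∀ x ∈ (vMDen V G).subgroupOf (vB0Num V G), θ x = 1 := by
    intro x hxm
    apply Subtype.ext
    show mk x.1 = 1
    have hxD : x.1 ∈ mk.ker := by rw [hkermk]; exact Subgroup.mem_subgroupOf.mp hxm
    exact MonoidHom.mem_ker.mp hxD
  let ψ : vM V G →* ↥(verbal V (FreeGroup G ⧸ D)) :=
    QuotientGroup.lift ((vMDen V G).subgroupOf (vB0Num V G)) θ hkill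
  have hinj : Function.Injective ψ := by
    rw [injective_iff_map_eq_one]
    intro a ha
    obtain ⟨x, rfl⟩ :=
      QuotientGroup.mk'_surjective ((vMDen V G).subgroupOf (vB0Num V G)) a
    have hθx : θ x = 1 := ha
    have hx1 : mk x.1 = 1 := congrArg Subtype.val hθx
    have hxD : x.1 ∈ D := hkermk ▸ MonoidHom.mem_ker.mpr hx1
    exact (QuotientGroup.eq_one_iff x).mpr (Subgroup.mem_subgroupOf.mpr hxD)
  refine ⟨Finite.of_injective ψ hinj, k, ?_⟩
  calc Nat.card (vM V G) ∣ Nat.card ↥(verbal V (FreeGroup G ⧸ D)) :=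
        myCard_dvd_of_injective ψ hinj
    _ ∣ (marginal V (FreeGroup G ⧸ D)).index ^ k := hk
    _ ∣ Nat.card G ^ k := pow_dvd_pow_of_dvd hidx_dvd k

lemma stmt13_backward (V : Set (FreeGroup ℕ))
    (h : ∀ (G : Type u) [Group G], Finite G →
      Finite (vM V G) ∧ ∃ k : ℕ, Nat.card (vM V G) ∣ Nat.card G ^ k) :
    IsSchurBaer.{u} V := by
  intro G _ hfi
  classical
  haveI := hfi
  let proj : G →* G ⧸ marginal V G := QuotientGroup.mk' (marginal V G)
  haveI : Finite (G ⧸ marginal V G) := Subgroup.finite_quotient_of_finiteIndex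
  obtain ⟨hfinvM, k, hk⟩ := h (G ⧸ marginal V G) inferInstance
  set Q := G ⧸ marginal V G with hQ
  have hcardQ : Nat.card Q = (marginal V G).index := rfl
  let s : Q → G := Quotient.out
  have hs : ∀ q, proj (s q) = q := fun q => QuotientGroup.out_eq' q
  let ρ : FreeGroup Q →* G := FreeGroup.lift s
  have hproj_ρ : ∀ w, proj (ρ w) = presHom Q w := by
    intro w
    rw [myLift_comp]
    show FreeGroup.lift (fun q => proj (s q)) w = FreeGroup.lift id w
    have : (fun q => proj (s q)) = (id : Q → Q) := funext hs
    rw [this]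
  have hR : ∀ r ∈ presKer Q, ρ r ∈ marginal V G := by
    intro r hr
    have h1 : proj (ρ r) = 1 := by rw [hproj_ρ]; exact hr
    have h2 : ρ r ∈ proj.ker := MonoidHom.mem_ker.mpr h1
    rwa [QuotientGroup.ker_mk'] at h2
  -- `ρ` kills the denominator `[R V* F]`
  have hDker : vMDen V Q ≤ ρ.ker := by
    rw [vMDen, Subgroup.closure_le]
    rintro x ⟨v, hv, f, i, r, hr, rfl⟩
    have hrM : ρ r ∈ marginal V G := hR r hr
    show _ ∈ ρ.ker
    rw [MonoidHom.mem_ker, map_mul, map_inv, myLift_comp, myLift_comp]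
    have hupd : (fun n => ρ (Function.update f i (f i * r) n))
        = Function.update (fun n => ρ (f n)) i (ρ (f i) * ρ r) := by
      funext n
      rcases eq_or_ne n i with rfl | hn
      · rw [Function.update_self, Function.update_self, map_mul]
      · rw [Function.update_of_ne hn, Function.update_of_ne hn]
    rw [hupd]
    exact mul_inv_eq_one.mpr (hrM v hv (fun n => ρ (f n)) i)
  -- every value of a word in `G` is `ρ` of a value in the free group on `Q`
  have hVle : verbal V G ≤ (verbal V (FreeGroup Q)).map ρ := by
    rw [verbal, Subgroup.closure_le]
    rintro x ⟨v, hv, f, rfl⟩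
    have ha : ∀ n, (f n)⁻¹ * s (proj (f n)) ∈ marginal V G := by
      intro n
      have h1 : proj ((f n)⁻¹ * s (proj (f n))) = 1 := by
        rw [map_mul, map_inv, hs]
        group
      have h2 : (f n)⁻¹ * s (proj (f n)) ∈ proj.ker := MonoidHom.mem_ker.mpr h1
      rwa [QuotientGroup.ker_mk'] at h2
    have h1 : FreeGroup.lift (fun n => s (proj (f n))) v = FreeGroup.lift f v := by
      have h2 := marginal_replace hv f (fun n => (f n)⁻¹ * s (proj (f n))) ha
      rw [← h2]
      have h3 : (fun n => f n * ((f n)⁻¹ * s (proj (f n)))) = fun n => s (proj (f n)) := by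
        funext n
        rw [mul_inv_cancel_left]
      rw [h3]
    refine ⟨FreeGroup.lift (fun n => FreeGroup.of (proj (f n))) v,
      Subgroup.subset_closure ⟨v, hv, _, rfl⟩, ?_⟩
    rw [myLift_comp, ← h1]
    have h4 : (fun a => ρ (FreeGroup.of (proj (f a)))) = fun n => s (proj (f n)) := by
      funext n
      show FreeGroup.lift s (FreeGroup.of (proj (f n))) = _
      rw [FreeGroup.lift_apply_of]
    rw [h4]
  -- the homomorphism from `vM V Q` onto `V(G) ∩ V*(G)`
  have hnum : ∀ x : vB0Num V Q, (ρ.comp (vB0Num V Q).subtype) x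
      ∈ verbal V G ⊓ marginal V G := by
    intro x
    obtain ⟨hker, hverb⟩ := Subgroup.mem_inf.mp x.2
    exact Subgroup.mem_inf.mpr ⟨verbal_map_le V ρ ⟨x.1, hverb, rfl⟩, hR x.1 hker⟩
  let θ : ↥(vB0Num V Q) →* ↥(verbal V G ⊓ marginal V G) :=
    (ρ.comp (vB0Num V Q).subtype).codRestrict _ hnum
  have hkill : ∀ x ∈ (vMDen V Q).subgroupOf (vB0Num V Q), θ x = 1 := by
    intro x hxm
    apply Subtype.ext
    show ρ x.1 = 1
    exact MonoidHom.mem_ker.mp (hDker (Subgroup.mem_subgroupOf.mp hxm))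
  let ψ : vM V Q →* ↥(verbal V G ⊓ marginal V G) :=
    QuotientGroup.lift ((vMDen V Q).subgroupOf (vB0Num V Q)) θ hkill
  have hsurj : Function.Surjective ψ := by
    intro y
    obtain ⟨hyv, hym⟩ := Subgroup.mem_inf.mp y.2
    obtain ⟨x, hxverb, hρx⟩ := hVle hyv
    have hxker : x ∈ presKer Q := by
      show presHom Q x = 1
      rw [← hproj_ρ, hρx]
      exact (QuotientGroup.eq_one_iff _).mpr hym
    refine ⟨QuotientGroup.mk ⟨x, Subgroup.mem_inf.mpr ⟨hxker, hxverb⟩⟩, ?_⟩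
    exact Subtype.ext hρx
  haveI hfinVM : Finite ↥(verbal V G ⊓ marginal V G) := Finite.of_surjective ψ hsurj
  have hcard1 : Nat.card ↥(verbal V G ⊓ marginal V G) ∣ (marginal V G).index ^ k := by
    calc Nat.card ↥(verbal V G ⊓ marginal V G) ∣ Nat.card (vM V Q) :=
          myCard_dvd_of_surjective ψ hsurj
      _ ∣ Nat.card Q ^ k := hk
      _ = (marginal V G).index ^ k := by rw [hcardQ]
  -- the quotient of `V(G)` by `V(G) ∩ V*(G)` embeds in `Q`
  let π₁ : ↥(verbal V G) →* Q := proj.comp (verbal V G).subtype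
  have hkerπ : π₁.ker = (marginal V G).subgroupOf (verbal V G) := by
    ext x
    rw [MonoidHom.mem_ker, Subgroup.mem_subgroupOf]
    exact QuotientGroup.eq_one_iff _
  have hcardquot : Nat.card (↥(verbal V G) ⧸ (marginal V G).subgroupOf (verbal V G))
      ∣ (marginal V G).index := by
    rw [← hkerπ, ← hcardQ]
    calc Nat.card (↥(verbal V G) ⧸ π₁.ker) = Nat.card π₁.range :=
          Nat.card_congr (QuotientGroup.quotientKerEquivRange π₁).toEquiv
      _ ∣ Nat.card Q := Subgroup.card_subgroup_dvd_card _
  haveI hfinquot : Finite (↥(verbal V G) ⧸ (marginal V G).subgroupOf (verbal V G)) := by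
    rw [← hkerπ]
    exact Finite.of_equiv _ (QuotientGroup.quotientKerEquivRange π₁).symm.toEquiv
  have heq : (marginal V G).subgroupOf (verbal V G)
      = (verbal V G ⊓ marginal V G).subgroupOf (verbal V G) := by
    rw [inf_comm, Subgroup.inf_subgroupOf_right]
  let e2 : ↥((verbal V G ⊓ marginal V G).subgroupOf (verbal V G)) ≃* ↥(verbal V G ⊓ marginal V G) :=
    Subgroup.subgroupOfEquivOfLe inf_le_left
  haveI hfinsub : Finite ↥((marginal V G).subgroupOf (verbal V G)) := by
    rw [heq]
    exact Finite.of_equiv _ e2.symm.toEquiv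
  have hcardsub : Nat.card ↥((marginal V G).subgroupOf (verbal V G))
      = Nat.card ↥(verbal V G ⊓ marginal V G) := by
    rw [heq]
    exact Nat.card_congr e2.toEquiv
  refine ⟨Finite.of_equiv _ (Subgroup.groupEquivQuotientProdSubgroup
    (s := (marginal V G).subgroupOf (verbal V G))).symm, k + 1, ?_⟩
  calc Nat.card ↥(verbal V G)
      = Nat.card (↥(verbal V G) ⧸ (marginal V G).subgroupOf (verbal V G))
        * Nat.card ↥((marginal V G).subgroupOf (verbal V G)) :=
        Subgroup.card_eq_card_quotient_mul_card_subgroup _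
    _ ∣ (marginal V G).index * (marginal V G).index ^ k :=
        mul_dvd_mul hcardquot (by rw [hcardsub]; exact hcard1)
    _ = (marginal V G).index ^ (k + 1) := (pow_succ' _ _).symm

/-- Theorem 1.17 of [9]. A variety `𝒱` defined by a set of words `V` is a
Schur-Baer variety if and only if for every finite group `G` the Baer invariant `𝒱M(G)` is
finite of order dividing a power of `|G|`. -/
theorem stmt13 (V : Set (FreeGroup ℕ)) :
    IsSchurBaer.{u} V ↔
      ∀ (G : Type u) [Group G], Finite G →
        Finite (vM V G) ∧ ∃ k : ℕ, Nat.card (vM V G) ∣ Nat.card G ^ k := by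
  exact ⟨fun hSB G _ hG => stmt13_forward V hSB G hG, fun h => stmt13_backward V h⟩
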